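/- For integers d ≥ 2 and k ≥ 1, let N = N(d,k) be the number of vertices of F(d,k) and let A(k) be its adjacency matrix. Then the characteristic polynomial of A(k) equals x^{N−d} · (x^d − x^{d−1} − x^{d−2} − ⋯ − 1); in particular, the spectrum of F(d,k) consists of the d zeros of x^d − x^{d−1} − ⋯ − 1 together with the eigenvalue 0 with multiplicity N − d. -/

import Mathlib

open Polynomial Matrix

section KeyLemma

variable {m n : Type*} [Fintype m] [Fintype n] [DecidableEq m] [DecidableEq n]

lemma charmatrix_map_frac {K : Type*} [Field K] (φ : Polynomial ℤ →+* K)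
    (M : Matrix m m ℤ) :
    (charmatrix M).map φ = φ X • (1 : Matrix m m K) - M.map (φ.comp C) := by
  ext i j
  by_cases h : i = j
  · subst h
    simp [charmatrix_apply_eq, Matrix.one_apply, Matrix.smul_apply]
  · simp [charmatrix_apply_ne _ _ _ h, Matrix.one_apply_ne h, Matrix.smul_apply]

lemma key_charpoly_comm (A : Matrix m n ℤ) (B : Matrix n m ℤ) :
    X ^ Fintype.card n * (A * B).charpoly = X ^ Fintype.card m * (B * A).charpoly := by
  set R := Polynomial ℤ
  let K := FractionRing R
  have hinj : Function.Injective (algebraMap R K) := IsFractionRing.injective R K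
  apply hinj
  set φ := algebraMap R K
  set t : K := φ X with ht
  have htne : t ≠ 0 := by
    simp only [ht]
    intro h
    exact Polynomial.X_ne_zero (hinj (by simpa using h))
  set ψ : ℤ →+* K := φ.comp C
  have hc : ∀ (M : Matrix m m ℤ), φ M.charpoly = t ^ Fintype.card m * Matrix.det (1 - t⁻¹ • (M.map ψ)) := by
    intro M
    rw [Matrix.charpoly, RingHom.map_det, RingHom.mapMatrix_apply, charmatrix_map_frac]
    rw [show (φ X • (1 : Matrix m m K) - M.map ψ) = t • ((1 : Matrix m m K) - t⁻¹ • M.map ψ) by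
      rw [smul_sub, smul_smul, mul_inv_cancel₀ htne, one_smul]]
    rw [Matrix.det_smul]
  have hc' : ∀ (M : Matrix n n ℤ), φ M.charpoly = t ^ Fintype.card n * Matrix.det (1 - t⁻¹ • (M.map ψ)) := by
    intro M
    rw [Matrix.charpoly, RingHom.map_det, RingHom.mapMatrix_apply, charmatrix_map_frac]
    rw [show (φ X • (1 : Matrix n n K) - M.map ψ) = t • ((1 : Matrix n n K) - t⁻¹ • M.map ψ) by
      rw [smul_sub, smul_smul, mul_inv_cancel₀ htne, one_smul]]
    rw [Matrix.det_smul]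
  rw [_root_.map_mul, _root_.map_mul, map_pow, map_pow, hc, hc']
  have h1 : (A * B).map ψ = A.map ψ * B.map ψ := Matrix.map_mul
  have h2 : (B * A).map ψ = B.map ψ * A.map ψ := Matrix.map_mul
  rw [h1, h2]
  have h3 : t⁻¹ • (A.map ψ * B.map ψ) = (t⁻¹ • A.map ψ) * B.map ψ := by
    rw [Matrix.smul_mul]
  have h4 : t⁻¹ • (B.map ψ * A.map ψ) = B.map ψ * (t⁻¹ • A.map ψ) := by
    rw [Matrix.mul_smul]
  rw [h3, h4, Matrix.det_one_sub_mul_comm]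
  ring

end KeyLemma

section BaseDet

noncomputable def Tmat (n : ℕ) : Matrix (Fin n) (Fin n) (Polynomial ℤ) :=
  Matrix.of fun j l =>
    if (j : ℕ) = 0 then -1
    else if (l : ℕ) + 1 = (j : ℕ) then X
    else if (l : ℕ) = (j : ℕ) then -1 else 0

lemma det_Tmat : ∀ n : ℕ, 1 ≤ n →
    (Tmat n).det = (-1) ^ n * ∑ i ∈ Finset.range n, (X : Polynomial ℤ) ^ i := by
  intro n
  induction n with
  | zero => omega
  | succ m ih =>
    intro _
    rcases Nat.eq_zero_or_pos m with hm | hm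
    · subst hm
      rw [show (Tmat 1).det = Tmat 1 0 0 from Matrix.det_fin_one _]
      simp [Tmat]
    · obtain ⟨p, rfl⟩ : ∃ p, m = p + 1 := ⟨m - 1, by omega⟩
      rw [Matrix.det_succ_column_zero]
      rw [Fin.sum_univ_succ, Fin.sum_univ_succ]
      have h0 : Tmat (p + 2) 0 0 = -1 := by simp [Tmat]
      have h1 : Tmat (p + 2) 1 0 = X := by
        simp [Tmat, Fin.val_one]
      have hzero : ∑ i : Fin p,
          (-1 : Polynomial ℤ) ^ ((i.succ.succ : Fin (p+2)) : ℕ) * Tmat (p+2) i.succ.succ 0 *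
            ((Tmat (p+2)).submatrix i.succ.succ.succAbove Fin.succ).det = 0 := by
        apply Finset.sum_eq_zero
        intro i _
        have h2 : ((i.succ.succ : Fin (p+2)) : ℕ) = (i : ℕ) + 2 := by simp
        have hrest : Tmat (p + 2) i.succ.succ 0 = 0 := by
          simp only [Tmat, Matrix.of_apply, h2]
          have ha : ¬((i:ℕ) + 2 = 0) := by omega
          have h3 : ¬(((0:Fin (p+2)) : ℕ) + 1 = (i:ℕ) + 2) := by
            simp only [Fin.val_zero]; omega
          have h4 : ¬(((0:Fin (p+2)) : ℕ) = (i:ℕ) + 2) := by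
            simp only [Fin.val_zero]; omega
          simp [ha, h3, h4]
        rw [hrest]
        ring
      have hminor0 : ((Tmat (p+2)).submatrix (Fin.succAbove 0) Fin.succ).det = (-1)^(p+1) := by
        have hsub : (Tmat (p+2)).submatrix (Fin.succAbove 0) Fin.succ =
            Matrix.of (fun j l : Fin (p+1) =>
              if (l : ℕ) + 1 = (j : ℕ) then X else if (l : ℕ) = (j : ℕ) then -1 else 0) := by
          ext j l
          have hj : ((Fin.succAbove 0 j : Fin (p+2)) : ℕ) = (j : ℕ) + 1 := by
            simp [Fin.succAbove]
          have hl : ((l.succ : Fin (p+2)) : ℕ) = (l : ℕ) + 1 := by simp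
          simp only [Matrix.submatrix_apply, Tmat, Matrix.of_apply, hj, hl]
          have hne : ¬((j:ℕ) + 1 = 0) := by omega
          simp only [hne, if_false]
          by_cases h : (l:ℕ) + 1 = (j:ℕ)
          · simp [h, show (l:ℕ)+1+1 = (j:ℕ)+1 from by omega]
          · have h' : ¬((l:ℕ)+1+1 = (j:ℕ)+1) := by omega
            have h'' : ((l:ℕ)+1 = (j:ℕ)+1) ↔ ((l:ℕ) = (j:ℕ)) := by omega
            simp [h, h', h'']
        rw [hsub]
        have htri : (Matrix.of (fun j l : Fin (p+1) =>
            if (l : ℕ) + 1 = (j : ℕ) then X else if (l : ℕ) = (j : ℕ) then (-1 : Polynomial ℤ) else 0)).BlockTriangular OrderDual.toDual := by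
          intro r c hrc
          have : (r : ℕ) < (c : ℕ) := hrc
          have hx : ¬((c:ℕ) + 1 = (r:ℕ)) := by omega
          have hy : ¬((c:ℕ) = (r:ℕ)) := by omega
          simp [hx, hy]
        rw [Matrix.det_of_lowerTriangular _ htri]
        have : ∀ j : Fin (p+1), (Matrix.of (fun j l : Fin (p+1) =>
            if (l : ℕ) + 1 = (j : ℕ) then X else if (l : ℕ) = (j : ℕ) then (-1 : Polynomial ℤ) else 0)) j j = -1 := by
          intro j
          have : ¬((j:ℕ) + 1 = (j:ℕ)) := by omega
          simp [this]
        rw [Finset.prod_congr rfl (fun j _ => this j)]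
        simp
      have hminor1 : (Tmat (p+2)).submatrix (Fin.succAbove 1) Fin.succ = Tmat (p+1) := by
        ext j l
        have hj : ((Fin.succAbove 1 j : Fin (p+2)) : ℕ) = if (j:ℕ) = 0 then 0 else (j : ℕ) + 1 := by
          rcases Nat.eq_zero_or_pos (j : ℕ) with h | h
          · have : Fin.castSucc j < 1 := by
              rw [Fin.lt_def]; simp [h, Fin.val_one]
            simp [Fin.succAbove, this, h]
          · have : ¬(Fin.castSucc j < 1) := by
              rw [Fin.lt_def]; simp only [Fin.coe_castSucc, Fin.val_one]; omega
            simp [Fin.succAbove, this, show ¬((j:ℕ) = 0) from by omega]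
        have hl : ((l.succ : Fin (p+2)) : ℕ) = (l : ℕ) + 1 := by simp
        simp only [Matrix.submatrix_apply, Tmat, Matrix.of_apply, hj, hl]
        by_cases h : (j:ℕ) = 0
        · simp [h]
        · have h1' : ¬((j:ℕ) + 1 = 0) := by omega
          have h2' : ((l:ℕ)+1 = (j:ℕ)+1) ↔ ((l:ℕ) = (j:ℕ)) := by omega
          have h3' : ((l:ℕ)+1+1 = (j:ℕ)+1) ↔ ((l:ℕ)+1 = (j:ℕ)) := by omega
          simp only [h, if_false, h1', h2', h3']
      simp only [show p+1+1 = p+2 from rfl, Fin.succ_zero_eq_one]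
      rw [hzero, add_zero, h0, h1, hminor1, hminor0, ih (by omega)]
      rw [Finset.sum_range_succ' (fun i => (X : Polynomial ℤ)^i) (p+1)]
      simp only [pow_succ, pow_zero, ← Finset.sum_mul, Fin.val_zero, Fin.val_one]
      ring

noncomputable def Mbase (d : ℕ) : Matrix (Fin d) (Fin d) ℤ :=
  Matrix.of fun i j =>
    if (((i : ℕ) : ZMod d) ≠ 0 → ((j : ℕ) : ZMod d) = ((i : ℕ) : ZMod d) + 1) then 1 else 0

lemma Mbase_eq (d : ℕ) [NeZero d] (i j : Fin d) :
    Mbase d i j =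
      if ((i : ℕ) = 0 ∨ (j : ℕ) = (i : ℕ) + 1 ∨ ((i : ℕ) = d - 1 ∧ (j : ℕ) = 0)) then 1
      else 0 := by
  have hd : 1 ≤ d := Nat.one_le_iff_ne_zero.mpr (NeZero.ne d)
  have hi := i.isLt
  have hj := j.isLt
  have h1 : (((i : ℕ) : ZMod d) = 0) ↔ (i : ℕ) = 0 := by
    rw [show (0 : ZMod d) = ((0 : ℕ) : ZMod d) from by simp, ZMod.natCast_eq_natCast_iff',
      Nat.mod_eq_of_lt hi, Nat.zero_mod]
  have h2 : (((j : ℕ) : ZMod d) = ((i : ℕ) : ZMod d) + 1) ↔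
      ((j : ℕ) = (i : ℕ) + 1 ∨ ((i : ℕ) = d - 1 ∧ (j : ℕ) = 0)) := by
    rw [show ((i : ℕ) : ZMod d) + 1 = (((i : ℕ) + 1 : ℕ) : ZMod d) from by push_cast; ring,
      ZMod.natCast_eq_natCast_iff', Nat.mod_eq_of_lt hj]
    rcases Nat.lt_or_ge ((i : ℕ) + 1) d with h | h
    · rw [Nat.mod_eq_of_lt h]; omega
    · have : (i : ℕ) + 1 = d := by omega
      rw [this, Nat.mod_self]; omega
  have hiff : (((i : ℕ) : ZMod d) ≠ 0 → ((j : ℕ) : ZMod d) = ((i : ℕ) : ZMod d) + 1) ↔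
      ((i : ℕ) = 0 ∨ (j : ℕ) = (i : ℕ) + 1 ∨ ((i : ℕ) = d - 1 ∧ (j : ℕ) = 0)) := by
    constructor
    · intro h
      by_cases hz : (i : ℕ) = 0
      · exact Or.inl hz
      · exact Or.inr (h2.mp (h (fun c => hz (h1.mp c))))
    · intro h hz
      rcases h with h | h
      · exact absurd (h1.mpr h) hz
      · exact h2.mpr h
  unfold Mbase
  rw [Matrix.of_apply, if_congr hiff rfl rfl]

lemma Mbase_one (d : ℕ) [NeZero d] (i j : Fin d)
    (h : (i : ℕ) = 0 ∨ (j : ℕ) = (i : ℕ) + 1 ∨ ((i : ℕ) = d - 1 ∧ (j : ℕ) = 0)) :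
    Mbase d i j = 1 := by rw [Mbase_eq, if_pos h]

lemma Mbase_zero (d : ℕ) [NeZero d] (i j : Fin d)
    (h : ¬((i : ℕ) = 0 ∨ (j : ℕ) = (i : ℕ) + 1 ∨ ((i : ℕ) = d - 1 ∧ (j : ℕ) = 0))) :
    Mbase d i j = 0 := by rw [Mbase_eq, if_neg h]

lemma charpoly_Mbase (m : ℕ) :
    (Mbase (m + 2)).charpoly =
      X ^ (m + 2) - ∑ i ∈ Finset.range (m + 2), (X : Polynomial ℤ) ^ i := by
  rw [Matrix.charpoly, Matrix.det_succ_column_zero, Fin.sum_univ_succ]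
  have e00 : charmatrix (Mbase (m + 2)) 0 0 = X - 1 := by
    have h1 : Mbase (m + 2) 0 0 = 1 :=
      Mbase_one _ _ _ (by left; simp)
    rw [charmatrix_apply_eq, h1]
    simp
  have hminor0 : ((charmatrix (Mbase (m + 2))).submatrix (Fin.succAbove 0) Fin.succ).det
      = X ^ (m + 1) := by
    have hub : ∀ r : Fin (m + 1), ((Fin.succAbove 0 r : Fin (m + 2)) : ℕ) = (r : ℕ) + 1 := by
      intro r; simp [Fin.succAbove]
    have htri : ((charmatrix (Mbase (m + 2))).submatrix (Fin.succAbove 0) Fin.succ).BlockTriangular id := by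
      intro r c hrc
      have hv : (c : ℕ) < (r : ℕ) := hrc
      have hr := r.isLt
      rw [Matrix.submatrix_apply]
      have hne : (Fin.succAbove 0 r : Fin (m + 2)) ≠ c.succ := by
        rw [Fin.ne_iff_vne, hub r, Fin.val_succ]; omega
      have hz : Mbase (m + 2) (Fin.succAbove 0 r) c.succ = 0 :=
        Mbase_zero _ _ _ (by simp only [hub r, Fin.val_succ]; omega)
      rw [charmatrix_apply_ne _ _ _ hne, hz]
      simp
    rw [Matrix.det_of_upperTriangular htri]
    have hdiag : ∀ j : Fin (m + 1),
        (charmatrix (Mbase (m + 2))).submatrix (Fin.succAbove 0) Fin.succ j j = X := by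
      intro j
      have hjlt := j.isLt
      rw [Matrix.submatrix_apply]
      have heq : (Fin.succAbove 0 j : Fin (m + 2)) = j.succ := by
        rw [Fin.ext_iff, hub j, Fin.val_succ]
      have hz : Mbase (m + 2) j.succ j.succ = 0 :=
        Mbase_zero _ _ _ (by simp only [Fin.val_succ]; omega)
      rw [heq, charmatrix_apply_eq, hz]
      simp
    rw [Finset.prod_congr rfl (fun j _ => hdiag j)]
    simp [Finset.card_univ]
  have hent : ∀ i : Fin (m + 1),
      charmatrix (Mbase (m + 2)) i.succ 0 = if i = Fin.last m then -1 else 0 := by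
    intro i
    have hilt := i.isLt
    have hne : (i.succ : Fin (m + 2)) ≠ 0 := Fin.succ_ne_zero i
    rw [charmatrix_apply_ne _ _ _ hne]
    by_cases h : i = Fin.last m
    · subst h
      have h1 : Mbase (m + 2) (Fin.last m).succ 0 = 1 :=
        Mbase_one _ _ _ (by right; right; constructor <;> simp)
      rw [h1, if_pos rfl]
      simp
    · have hlt : (i : ℕ) < m := by
        rcases Nat.lt_or_ge (i : ℕ) m with h' | h'
        · exact h'
        · exact absurd (Fin.ext (by simp only [Fin.val_last]; omega : (i : ℕ) = (Fin.last m : ℕ))) h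
      have h1 : Mbase (m + 2) i.succ 0 = 0 :=
        Mbase_zero _ _ _ (by simp only [Fin.val_succ, Fin.val_zero]; omega)
      rw [h1, if_neg h]
      simp
  have hminor1 : (charmatrix (Mbase (m + 2))).submatrix (Fin.last (m + 1)).succAbove Fin.succ
      = Tmat (m + 1) := by
    rw [Fin.succAbove_last]
    refine Matrix.ext fun j l => ?_
    have hjlt := j.isLt
    have hllt := l.isLt
    rw [Matrix.submatrix_apply]
    rw [show Tmat (m + 1) j l = (if (j : ℕ) = 0 then -1
      else if (l : ℕ) + 1 = (j : ℕ) then X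
      else if (l : ℕ) = (j : ℕ) then -1 else 0) from rfl]
    by_cases hj : (j : ℕ) = 0
    · have hne : (Fin.castSucc j : Fin (m + 2)) ≠ l.succ := by
        rw [Fin.ne_iff_vne, Fin.coe_castSucc, Fin.val_succ, hj]; omega
      have h1 : Mbase (m + 2) (Fin.castSucc j) l.succ = 1 :=
        Mbase_one _ _ _ (by simp only [Fin.coe_castSucc, Fin.val_succ]; first | (left; omega) | (right; left; omega))
      rw [charmatrix_apply_ne _ _ _ hne, h1, if_pos hj]
      simp
    · rw [if_neg hj]
      by_cases hjl : (l : ℕ) + 1 = (j : ℕ)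
      · have heq : (Fin.castSucc j : Fin (m + 2)) = l.succ := by
          rw [Fin.ext_iff, Fin.coe_castSucc, Fin.val_succ]; omega
        have hz : Mbase (m + 2) l.succ l.succ = 0 :=
          Mbase_zero _ _ _ (by simp only [Fin.val_succ]; omega)
        rw [heq, charmatrix_apply_eq, hz, if_pos hjl]
        simp
      · rw [if_neg hjl]
        have hne : (Fin.castSucc j : Fin (m + 2)) ≠ l.succ := by
          rw [Fin.ne_iff_vne, Fin.coe_castSucc, Fin.val_succ]; omega
        rw [charmatrix_apply_ne _ _ _ hne]
        by_cases hl : (l : ℕ) = (j : ℕ)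
        · have h1 : Mbase (m + 2) (Fin.castSucc j) l.succ = 1 :=
            Mbase_one _ _ _ (by simp only [Fin.coe_castSucc, Fin.val_succ]; first | (left; omega) | (right; left; omega))
          rw [h1, if_pos hl]
          simp
        · have h1 : Mbase (m + 2) (Fin.castSucc j) l.succ = 0 :=
            Mbase_zero _ _ _ (by simp only [Fin.coe_castSucc, Fin.val_succ]; omega)
          rw [h1, if_neg hl]
          simp
  have hsum : ∑ i : Fin (m + 1),
      (-1 : Polynomial ℤ) ^ ((i.succ : Fin (m + 2)) : ℕ) * charmatrix (Mbase (m + 2)) i.succ 0 *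
        ((charmatrix (Mbase (m + 2))).submatrix i.succ.succAbove Fin.succ).det
      = - ∑ i ∈ Finset.range (m + 1), (X : Polynomial ℤ) ^ i := by
    rw [Finset.sum_eq_single (Fin.last m)]
    · rw [hent, if_pos rfl, show (Fin.last m).succ = Fin.last (m + 1) from rfl, hminor1,
        det_Tmat (m + 1) (by omega), Fin.val_last]
      have h4 : (-1 : Polynomial ℤ) ^ (m + 1) * (-1) ^ (m + 1) = 1 := by
        rw [← pow_add, ← two_mul, pow_mul]; norm_num
      linear_combination (-(∑ i ∈ Finset.range (m + 1), (X : Polynomial ℤ) ^ i)) * h4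
    · intro i _ hi
      rw [hent, if_neg hi]
      ring
    · intro h
      exact absurd (Finset.mem_univ _) h
  rw [e00, hminor0, hsum]
  rw [Finset.sum_range_succ (fun i => (X : Polynomial ℤ) ^ i) (m + 1)]
  simp only [Fin.val_zero, pow_zero, one_mul]
  ring

end BaseDet



/-- A vertex of the d-Fibonacci digraph F(d,k): a sequence x : Fin k → ZMod d
such that whenever a digit is nonzero, the next digit is its successor mod d. -/
def fibIsVertex (d k : ℕ) (x : Fin k → ZMod d) : Prop :=
  ∀ (i : ℕ) (h : i + 1 < k),
    x ⟨i, Nat.lt_of_succ_lt h⟩ ≠ 0 →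
      x ⟨i + 1, h⟩ = x ⟨i, Nat.lt_of_succ_lt h⟩ + 1

/-- The arc relation of F(d,k): y is the left shift of x, and if the last digit
of x is nonzero then the last digit of y is its successor mod d. -/
def fibArc (d k : ℕ) (x y : Fin k → ZMod d) : Prop :=
  (∀ (i : ℕ) (h : i + 1 < k), y ⟨i, Nat.lt_of_succ_lt h⟩ = x ⟨i + 1, h⟩) ∧
  (∀ h : 0 < k, x ⟨k - 1, Nat.sub_lt h Nat.one_pos⟩ ≠ 0 →
    y ⟨k - 1, Nat.sub_lt h Nat.one_pos⟩ = x ⟨k - 1, Nat.sub_lt h Nat.one_pos⟩ + 1)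

attribute [local instance] Classical.propDecidable

/-- The adjacency matrix A(k) of F(d,k), with entry 1 for an arc and 0 otherwise. -/
noncomputable def fibAdjMatrix (d k : ℕ) [NeZero d] :
    Matrix {x : Fin k → ZMod d // fibIsVertex d k x}
           {x : Fin k → ZMod d // fibIsVertex d k x} ℤ :=
  fun x y => if fibArc d k x.1 y.1 then 1 else 0


namespace FibAux

open Polynomial Matrix

variable (d k : ℕ) [NeZero d]

lemma fibIsVertex_iff' (x : Fin k → ZMod d) :
    fibIsVertex d k x ↔
      ∀ i j : Fin k, (j : ℕ) = (i : ℕ) + 1 → x i ≠ 0 → x j = x i + 1 := by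
  constructor
  · intro h i j hji hxi
    have hlt : (i : ℕ) + 1 < k := hji ▸ j.isLt
    have := h (i : ℕ) hlt
    rw [show (⟨(i : ℕ), Nat.lt_of_succ_lt hlt⟩ : Fin k) = i from Fin.ext rfl,
      show (⟨(i : ℕ) + 1, hlt⟩ : Fin k) = j from Fin.ext hji.symm] at this
    exact this hxi
  · intro h i hlt hxi
    exact h ⟨i, Nat.lt_of_succ_lt hlt⟩ ⟨i + 1, hlt⟩ rfl hxi

lemma fibArc_iff' (x y : Fin k → ZMod d) :
    fibArc d k x y ↔
      ((∀ i j : Fin k, (j : ℕ) = (i : ℕ) + 1 → y i = x j) ∧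
        (∀ i : Fin k, (i : ℕ) = k - 1 → x i ≠ 0 → y i = x i + 1)) := by
  constructor
  · rintro ⟨h1, h2⟩
    constructor
    · intro i j hji
      have hlt : (i : ℕ) + 1 < k := hji ▸ j.isLt
      have := h1 (i : ℕ) hlt
      rwa [show (⟨(i : ℕ), Nat.lt_of_succ_lt hlt⟩ : Fin k) = i from Fin.ext rfl,
        show (⟨(i : ℕ) + 1, hlt⟩ : Fin k) = j from Fin.ext hji.symm] at this
    · intro i hi hne
      have hk : 0 < k := i.pos
      have hieq : i = ⟨k - 1, Nat.sub_lt hk Nat.one_pos⟩ := Fin.ext hi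
      rw [hieq]
      exact h2 hk (hieq ▸ hne)
  · rintro ⟨h1, h2⟩
    constructor
    · intro i hlt
      exact h1 ⟨i, Nat.lt_of_succ_lt hlt⟩ ⟨i + 1, hlt⟩ rfl
    · intro hk hne
      exact h2 ⟨k - 1, Nat.sub_lt hk Nat.one_pos⟩ rfl hne

/-- The vertex set of F(d,k). -/
abbrev FibV := {x : Fin k → ZMod d // fibIsVertex d k x}

/-- Source of an arc, viewing a vertex of F(d,k+1) as an arc of F(d,k). -/
noncomputable def fibSrc (z : FibV d (k + 1)) : FibV d k :=
  ⟨fun i => z.1 i.castSucc, by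
    rw [fibIsVertex_iff']
    intro i j hji hne
    exact (fibIsVertex_iff' d (k + 1) z.1).mp z.2 i.castSucc j.castSucc
      (by simp [hji]) hne⟩

/-- Target of an arc. -/
noncomputable def fibTgt (z : FibV d (k + 1)) : FibV d k :=
  ⟨fun i => z.1 i.succ, by
    rw [fibIsVertex_iff']
    intro i j hji hne
    exact (fibIsVertex_iff' d (k + 1) z.1).mp z.2 i.succ j.succ
      (by simp [hji]) hne⟩

lemma arc_src_tgt (hk : 1 ≤ k) (z : FibV d (k + 1)) :
    fibArc d k (fibSrc d k z).1 (fibTgt d k z).1 := by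
  rw [fibArc_iff']
  constructor
  · intro i j hji
    show z.1 i.succ = z.1 j.castSucc
    exact congrArg z.1 (Fin.ext (show ((i.succ : Fin (k+1)) : ℕ) = ((j.castSucc : Fin (k+1)) : ℕ) by
      simp only [Fin.val_succ, Fin.coe_castSucc]; omega))
  · intro i hi hne
    show z.1 i.succ = z.1 i.castSucc + 1
    exact (fibIsVertex_iff' d (k + 1) z.1).mp z.2 i.castSucc i.succ (by simp) hne

lemma arc_iff_tgt_src (hk : 1 ≤ k) (z w : FibV d (k + 1)) :
    fibArc d (k + 1) z.1 w.1 ↔ fibTgt d k z = fibSrc d k w := by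
  rw [fibArc_iff']
  constructor
  · rintro ⟨h1, _⟩
    refine Subtype.ext (funext fun a => ?_)
    show z.1 a.succ = w.1 a.castSucc
    exact (h1 a.castSucc a.succ (by simp)).symm
  · intro h
    have hfun : ∀ a : Fin k, z.1 a.succ = w.1 a.castSucc := fun a =>
      congrFun (congrArg Subtype.val h) a
    constructor
    · intro i j hji
      have hik : (i : ℕ) < k := by
        have := j.isLt; omega
      have hi : i = (⟨(i : ℕ), hik⟩ : Fin k).castSucc := Fin.ext rfl
      have hj : j = (⟨(i : ℕ), hik⟩ : Fin k).succ := Fin.ext hji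
      rw [hi, hj]
      exact (hfun _).symm
    · intro i hi hne
      have hik : (i : ℕ) = k := by omega
      have hkk : k - 1 < k := by omega
      have hia : i = (⟨k - 1, hkk⟩ : Fin k).succ := Fin.ext (by simp; omega)
      have hzw : z.1 i = w.1 (⟨k - 1, hkk⟩ : Fin k).castSucc := by rw [hia]; exact hfun _
      have := (fibIsVertex_iff' d (k + 1) w.1).mp w.2 (⟨k - 1, hkk⟩ : Fin k).castSucc i
        (by simp; omega) (by rw [hzw] at hne; exact hne)
      rw [this, hzw]

/-- Joining an arc (u,v) of F(d,k) into a vertex of F(d,k+1). -/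
noncomputable def fibJoin (hk : 1 ≤ k) (u v : FibV d k)
    (harc : fibArc d k u.1 v.1) : FibV d (k + 1) :=
  ⟨Fin.cons (u.1 ⟨0, hk⟩) v.1, by
    obtain ⟨h1, h2⟩ := (fibArc_iff' d k u.1 v.1).mp harc
    have hcast : ∀ a : Fin k, (Fin.cons (u.1 ⟨0, hk⟩) v.1 : Fin (k+1) → ZMod d) a.castSucc = u.1 a := by
      intro a
      by_cases h0 : (a : ℕ) = 0
      · rw [show a.castSucc = (0 : Fin (k + 1)) from Fin.ext (by simp [h0]),
          Fin.cons_zero, show a = (⟨0, hk⟩ : Fin k) from Fin.ext h0]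
      · have hb : (a : ℕ) - 1 < k := by have := a.isLt; omega
        rw [show a.castSucc = (⟨(a : ℕ) - 1, hb⟩ : Fin k).succ from Fin.ext (by simp; omega),
          Fin.cons_succ]
        exact h1 _ a (by simp; omega)
    rw [fibIsVertex_iff']
    intro i j hji hne
    have hik : (i : ℕ) < k := by have := j.isLt; omega
    have hi : i = (⟨(i : ℕ), hik⟩ : Fin k).castSucc := Fin.ext rfl
    rw [hi, hcast _] at hne ⊢
    by_cases hjk : (j : ℕ) < k
    · have hj : j = (⟨(j : ℕ), hjk⟩ : Fin k).castSucc := Fin.ext rfl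
      rw [hj, hcast _]
      exact (fibIsVertex_iff' d k u.1).mp u.2 _ _ (by simp [hji]) hne
    · have hjeq : (j : ℕ) = k := by have := j.isLt; omega
      have hj : j = (⟨(i : ℕ), hik⟩ : Fin k).succ := Fin.ext (by simp; omega)
      rw [hj, Fin.cons_succ]
      exact h2 _ (by simp; omega) hne⟩

lemma fibJoin_src (hk : 1 ≤ k) (u v : FibV d k) (harc : fibArc d k u.1 v.1) :
    fibSrc d k (fibJoin d k hk u v harc) = u := by
  obtain ⟨h1, _⟩ := (fibArc_iff' d k u.1 v.1).mp harc
  refine Subtype.ext (funext fun a => ?_)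
  show (Fin.cons (u.1 ⟨0, hk⟩) v.1 : Fin (k+1) → ZMod d) a.castSucc = u.1 a
  by_cases h0 : (a : ℕ) = 0
  · rw [show a.castSucc = (0 : Fin (k + 1)) from Fin.ext (by simp [h0]),
      Fin.cons_zero, show a = (⟨0, hk⟩ : Fin k) from Fin.ext h0]
  · have hb : (a : ℕ) - 1 < k := by have := a.isLt; omega
    rw [show a.castSucc = (⟨(a : ℕ) - 1, hb⟩ : Fin k).succ from Fin.ext (by simp; omega),
      Fin.cons_succ]
    exact h1 _ a (by simp; omega)

lemma fibJoin_tgt (hk : 1 ≤ k) (u v : FibV d k) (harc : fibArc d k u.1 v.1) :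
    fibTgt d k (fibJoin d k hk u v harc) = v := by
  refine Subtype.ext (funext fun a => ?_)
  show (Fin.cons (u.1 ⟨0, hk⟩) v.1 : Fin (k+1) → ZMod d) a.succ = v.1 a
  rw [Fin.cons_succ]

lemma fibJoin_unique (hk : 1 ≤ k) (u v : FibV d k) (harc : fibArc d k u.1 v.1)
    (z : FibV d (k + 1)) (hs : fibSrc d k z = u) (ht : fibTgt d k z = v) :
    z = fibJoin d k hk u v harc := by
  refine Subtype.ext (funext fun i => ?_)
  show z.1 i = (Fin.cons (u.1 ⟨0, hk⟩) v.1 : Fin (k+1) → ZMod d) i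
  by_cases h0 : (i : ℕ) = 0
  · rw [show i = (0 : Fin (k + 1)) from Fin.ext h0, Fin.cons_zero]
    have : z.1 (⟨0, hk⟩ : Fin k).castSucc = u.1 ⟨0, hk⟩ := by
      rw [← hs]; rfl
    rwa [show ((⟨0, hk⟩ : Fin k).castSucc : Fin (k + 1)) = 0 from Fin.ext (by simp)] at this
  · have hb : (i : ℕ) - 1 < k := by have := i.isLt; omega
    rw [show i = (⟨(i : ℕ) - 1, hb⟩ : Fin k).succ from Fin.ext (by simp; omega), Fin.cons_succ]
    rw [← ht]; rfl

/-- Source incidence matrix. -/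
noncomputable def Smat2 : Matrix (FibV d (k + 1)) (FibV d k) ℤ :=
  Matrix.of fun z u => if fibSrc d k z = u then 1 else 0

/-- Target incidence matrix. -/
noncomputable def Tmat2 : Matrix (FibV d (k + 1)) (FibV d k) ℤ :=
  Matrix.of fun z u => if fibTgt d k z = u then 1 else 0

lemma adj_succ_eq (hk : 1 ≤ k) :
    fibAdjMatrix d (k + 1) = Tmat2 d k * (Smat2 d k)ᵀ := by
  refine Matrix.ext fun z w => ?_
  rw [Matrix.mul_apply]
  have hterm : ∀ u : FibV d k,
      Tmat2 d k z u * (Smat2 d k)ᵀ u w =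
        if fibTgt d k z = u then (if fibSrc d k w = u then (1 : ℤ) else 0) else 0 := by
    intro u
    rw [Matrix.transpose_apply]
    show (if fibTgt d k z = u then (1:ℤ) else 0) * (if fibSrc d k w = u then 1 else 0) = _
    by_cases h : fibTgt d k z = u
    · rw [if_pos h, if_pos h, one_mul]
    · rw [if_neg h, if_neg h, zero_mul]
  rw [Finset.sum_congr rfl (fun u _ => hterm u),
    Finset.sum_ite_eq Finset.univ (fibTgt d k z) (fun u => if fibSrc d k w = u then (1:ℤ) else 0),
    if_pos (Finset.mem_univ _)]
  show (if fibArc d (k+1) z.1 w.1 then (1:ℤ) else 0) =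
    (if fibSrc d k w = fibTgt d k z then (1:ℤ) else 0)
  refine if_congr ?_ rfl rfl
  rw [arc_iff_tgt_src d k hk z w, eq_comm]

lemma adj_eq (hk : 1 ≤ k) :
    fibAdjMatrix d k = (Smat2 d k)ᵀ * Tmat2 d k := by
  refine Matrix.ext fun u v => ?_
  rw [Matrix.mul_apply]
  have hterm : ∀ z : FibV d (k + 1),
      (Smat2 d k)ᵀ u z * Tmat2 d k z v =
        if (fibSrc d k z = u ∧ fibTgt d k z = v) then (1 : ℤ) else 0 := by
    intro z
    rw [Matrix.transpose_apply]
    show (if fibSrc d k z = u then (1:ℤ) else 0) * (if fibTgt d k z = v then 1 else 0) = _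
    by_cases h1 : fibSrc d k z = u
    · by_cases h2 : fibTgt d k z = v
      · rw [if_pos h1, if_pos h2, one_mul,
          if_pos (show fibSrc d k z = u ∧ fibTgt d k z = v from ⟨h1, h2⟩)]
      · rw [if_pos h1, if_neg h2, one_mul,
          if_neg (show ¬(fibSrc d k z = u ∧ fibTgt d k z = v) from fun c => h2 c.2)]
    · rw [if_neg h1, zero_mul,
        if_neg (show ¬(fibSrc d k z = u ∧ fibTgt d k z = v) from fun c => h1 c.1)]
  rw [Finset.sum_congr rfl (fun z _ => hterm z)]
  by_cases harc : fibArc d k u.1 v.1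
  · have hsum : ∑ z : FibV d (k + 1),
        (if (fibSrc d k z = u ∧ fibTgt d k z = v) then (1 : ℤ) else 0) = 1 := by
      rw [Finset.sum_eq_single (fibJoin d k hk u v harc)]
      · rw [if_pos ⟨fibJoin_src d k hk u v harc, fibJoin_tgt d k hk u v harc⟩]
      · intro z _ hz
        rw [if_neg]
        rintro ⟨hs, ht⟩
        exact hz (fibJoin_unique d k hk u v harc z hs ht)
      · intro h
        exact absurd (Finset.mem_univ _) h
    rw [hsum]
    show (if fibArc d k u.1 v.1 then (1:ℤ) else 0) = 1
    rw [if_pos harc]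
  · have hsum : ∑ z : FibV d (k + 1),
        (if (fibSrc d k z = u ∧ fibTgt d k z = v) then (1 : ℤ) else 0) = 0 := by
      refine Finset.sum_eq_zero fun z _ => ?_
      rw [if_neg]
      rintro ⟨hs, ht⟩
      exact harc (by rw [← hs, ← ht]; exact arc_src_tgt d k hk z)
    rw [hsum]
    show (if fibArc d k u.1 v.1 then (1:ℤ) else 0) = 0
    rw [if_neg harc]

lemma card_ge (hk : 1 ≤ k) : d ≤ Nat.card (FibV d k) := by
  rw [Nat.card_eq_fintype_card]
  have hinj : Function.Injective (fun a : ZMod d =>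
      (⟨fun i => if (i : ℕ) = k - 1 then a else 0, by
        rw [fibIsVertex_iff']
        intro i j hji hne
        exfalso
        apply hne
        rw [if_neg]
        have := j.isLt
        omega⟩ : FibV d k)) := by
    intro a b hab
    have := congrFun (congrArg Subtype.val hab) ⟨k - 1, by omega⟩
    simpa using this
  have := Fintype.card_le_of_injective _ hinj
  rwa [ZMod.card] at this

end FibAux

namespace FibAux

open Polynomial Matrix

variable (d : ℕ) [NeZero d]

lemma fibIsVertex_one (x : Fin 1 → ZMod d) : fibIsVertex d 1 x := by
  intro i h
  omega

lemma fibArc_one_iff (x y : Fin 1 → ZMod d) :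
    fibArc d 1 x y ↔ (x 0 ≠ 0 → y 0 = x 0 + 1) := by
  have hx : ∀ (f : Fin 1 → ZMod d) (i : Fin 1), f i = f 0 :=
    fun f i => congrArg f (Subsingleton.elim i 0)
  constructor
  · intro h hne
    have h2 := h.2 Nat.one_pos
    rw [hx x, hx y] at h2
    exact h2 hne
  · intro h
    refine ⟨fun i hi => absurd hi (by omega), fun _ hne => ?_⟩
    rw [hx x, hx y]
    rw [hx x] at hne
    exact h hne

noncomputable def fibEquivOne : Fin d ≃ FibV d 1 where
  toFun i := ⟨fun _ => ((i : ℕ) : ZMod d), fibIsVertex_one d _⟩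
  invFun x := ⟨(x.1 0).val, ZMod.val_lt _⟩
  left_inv i := Fin.ext (ZMod.val_cast_of_lt i.isLt)
  right_inv x := Subtype.ext (funext fun j => by
    rw [Subsingleton.elim j 0]
    exact ZMod.natCast_rightInverse (x.1 0))

lemma charpoly_one (hd : 2 ≤ d) :
    (fibAdjMatrix d 1).charpoly =
      X ^ (Nat.card (FibV d 1) - d) *
        (X ^ d - ∑ i ∈ Finset.range d, (X : Polynomial ℤ) ^ i) := by
  have hcard : Nat.card (FibV d 1) = d := by
    rw [Nat.card_congr (fibEquivOne d).symm, Nat.card_eq_fintype_card, Fintype.card_fin]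
  have hM : fibAdjMatrix d 1 = Matrix.reindex (fibEquivOne d) (fibEquivOne d) (Mbase d) := by
    refine Matrix.ext fun x y => ?_
    rw [Matrix.reindex_apply, Matrix.submatrix_apply]
    have hxv : ((((fibEquivOne d).symm x : Fin d) : ℕ) : ZMod d) = x.1 0 :=
      ZMod.natCast_rightInverse (x.1 0)
    have hyv : ((((fibEquivOne d).symm y : Fin d) : ℕ) : ZMod d) = y.1 0 :=
      ZMod.natCast_rightInverse (y.1 0)
    show (if fibArc d 1 x.1 y.1 then (1:ℤ) else 0) = _
    rw [show Mbase d ((fibEquivOne d).symm x) ((fibEquivOne d).symm y) =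
      (if (((((fibEquivOne d).symm x : Fin d) : ℕ) : ZMod d) ≠ 0 →
        ((((fibEquivOne d).symm y : Fin d) : ℕ) : ZMod d) =
          ((((fibEquivOne d).symm x : Fin d) : ℕ) : ZMod d) + 1) then (1:ℤ) else 0) from rfl]
    refine if_congr ?_ rfl rfl
    rw [hxv, hyv, fibArc_one_iff]
  rw [hM, Matrix.charpoly_reindex, hcard, Nat.sub_self, pow_zero, one_mul]
  obtain ⟨m, rfl⟩ : ∃ m, d = m + 2 := ⟨d - 2, by omega⟩
  exact charpoly_Mbase m

end FibAux
/-- the characteristic polynomial of A(k) is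
x^{N−d}(x^d − x^{d−1} − ⋯ − 1), where N = N(d,k); so the spectrum of F(d,k)
consists of the d zeros of x^d − x^{d−1} − ⋯ − 1 plus N − d zero eigenvalues. -/
theorem fib_charpoly (d k : ℕ) [NeZero d] (hd : 2 ≤ d) (hk : 1 ≤ k) :
    (fibAdjMatrix d k).charpoly =
      Polynomial.X ^ (Nat.card {x : Fin k → ZMod d // fibIsVertex d k x} - d) *
        (Polynomial.X ^ d - ∑ i ∈ Finset.range d, Polynomial.X ^ i) := by
  induction k, hk using Nat.le_induction with
  | base => exact FibAux.charpoly_one d hd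
  | succ k hk ih =>
    have key := key_charpoly_comm (FibAux.Tmat2 d k) (FibAux.Smat2 d k)ᵀ
    rw [← FibAux.adj_succ_eq d k hk, ← FibAux.adj_eq d k hk] at key
    rw [← Nat.card_eq_fintype_card (α := FibAux.FibV d k),
      ← Nat.card_eq_fintype_card (α := FibAux.FibV d (k + 1)), ih] at key
    have h0 : d ≤ Nat.card (FibAux.FibV d k) := FibAux.card_ge d k hk
    have h1 : d ≤ Nat.card (FibAux.FibV d (k + 1)) := FibAux.card_ge d (k + 1) (by omega)
    apply mul_left_cancel₀
      (pow_ne_zero (Nat.card (FibAux.FibV d k)) (Polynomial.X_ne_zero (R := ℤ)))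
    rw [key, ← mul_assoc, ← mul_assoc, ← pow_add, ← pow_add,
      show Nat.card (FibAux.FibV d (k + 1)) + (Nat.card (FibAux.FibV d k) - d)
        = Nat.card (FibAux.FibV d k) + (Nat.card (FibAux.FibV d (k + 1)) - d) from by omega]
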